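/- Let ς ∈ {i, −i} and c ≠ 0, x₂ arbitrary. The 9×9 matrix given in block form [1], [[ς+1, −ς/c],[c, 0]], [[0,0,−ς/c²],[x₂,1,x₂ς/c²],[c²,0,ς+1]], [[0, −1/c],[ςc, ς+1]], [ς] satisfies the braid relation R̂₁R̂₂R̂₁ = R̂₂R̂₁R̂₂. -/

import Mathlib

open Matrix Polynomial

noncomputable section

/-- `R̂ ⊗ 1` acting on `V ⊗ V ⊗ V` with `V = ℂ^3`. -/
def R1 (R : Matrix (Fin 3 × Fin 3) (Fin 3 × Fin 3) ℂ) :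
    Matrix (Fin 3 × Fin 3 × Fin 3) (Fin 3 × Fin 3 × Fin 3) ℂ :=
  fun p q => R (p.1, p.2.1) (q.1, q.2.1) * (if p.2.2 = q.2.2 then 1 else 0)

/-- `1 ⊗ R̂` acting on `V ⊗ V ⊗ V` with `V = ℂ^3`. -/
def R2 (R : Matrix (Fin 3 × Fin 3) (Fin 3 × Fin 3) ℂ) :
    Matrix (Fin 3 × Fin 3 × Fin 3) (Fin 3 × Fin 3 × Fin 3) ℂ :=
  fun p q => (if p.1 = q.1 then 1 else 0) * R (p.2.1, p.2.2) (q.2.1, q.2.2)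

/-- The braid relation `R̂₁R̂₂R̂₁ = R̂₂R̂₁R̂₂`. -/
def Braid (R : Matrix (Fin 3 × Fin 3) (Fin 3 × Fin 3) ℂ) : Prop :=
  R1 R * R2 R * R1 R = R2 R * R1 R * R2 R

/-- position within the charge-1 sector: |10⟩, |01⟩. -/
def f1 (p : Fin 3 × Fin 3) : Fin 2 := if p = (1, 0) then 0 else 1

/-- position within the charge-2 sector: |20⟩, |11⟩, |02⟩. -/
def f2 (p : Fin 3 × Fin 3) : Fin 3 := if p = (2, 0) then 0 else if p = (1, 1) then 1 else 2

/-- position within the charge-3 sector: |21⟩, |12⟩. -/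
def f3 (p : Fin 3 × Fin 3) : Fin 2 := if p = (2, 1) then 0 else 1

/-- The 9×9 matrix with blocks of sizes 1,2,3,2,1 on the graded basis
|00⟩,|10⟩,|01⟩,|20⟩,|11⟩,|02⟩,|21⟩,|12⟩,|22⟩. -/
def blockR (b0 : ℂ) (B1 : Matrix (Fin 2) (Fin 2) ℂ) (B2 : Matrix (Fin 3) (Fin 3) ℂ)
    (B3 : Matrix (Fin 2) (Fin 2) ℂ) (b4 : ℂ) : Matrix (Fin 3 × Fin 3) (Fin 3 × Fin 3) ℂ :=
  fun p q =>
    if (p.1 : ℕ) + (p.2 : ℕ) ≠ (q.1 : ℕ) + (q.2 : ℕ) then 0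
    else if (p.1 : ℕ) + (p.2 : ℕ) = 0 then b0
    else if (p.1 : ℕ) + (p.2 : ℕ) = 1 then B1 (f1 p) (f1 q)
    else if (p.1 : ℕ) + (p.2 : ℕ) = 2 then B2 (f2 p) (f2 q)
    else if (p.1 : ℕ) + (p.2 : ℕ) = 3 then B3 (f3 p) (f3 q)
    else b4


namespace Sol5512Aux

lemma R1_smul (a : ℂ) (R) : R1 (a • R) = a • R1 R := by
  ext p q; simp [R1, Matrix.smul_apply]

lemma R2_smul (a : ℂ) (R) : R2 (a • R) = a • R2 R := by
  ext p q; simp [R2, Matrix.smul_apply]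

lemma braid_of_smul (a : ℂ) (ha : a ≠ 0) (R) (h : Braid (a • R)) : Braid R := by
  unfold Braid at h ⊢
  simp only [R1_smul, R2_smul, smul_mul_assoc, mul_smul_comm, smul_smul] at h
  exact smul_right_injective _ (show a * (a * a) ≠ 0 by simp [ha]) h

lemma L1 (X : Matrix (Fin 3 × Fin 3) (Fin 3 × Fin 3) ℂ) (i j k l m n : Fin 3) :
    (R1 X * R2 X * R1 X) (i,j,k) (l,m,n) =
    ∑ a : Fin 3, ∑ b : Fin 3, ∑ u : Fin 3, X (i,j) (a,b) * X (b,k) (u,n) * X (a,u) (l,m) := by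
  simp [Matrix.mul_apply, R1, R2, Fintype.sum_prod_type, Finset.mul_sum, Finset.sum_mul,
    mul_ite, ite_mul, Finset.sum_ite_eq, Finset.sum_ite_eq', mul_assoc]
  exact Finset.sum_congr rfl fun a _ => Finset.sum_comm

lemma L2 (X : Matrix (Fin 3 × Fin 3) (Fin 3 × Fin 3) ℂ) (i j k l m n : Fin 3) :
    (R2 X * R1 X * R2 X) (i,j,k) (l,m,n) =
    ∑ b : Fin 3, ∑ u : Fin 3, ∑ t : Fin 3, X (j,k) (t,u) * X (i,t) (l,b) * X (b,u) (m,n) := by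
  simp [Matrix.mul_apply, R1, R2, Fintype.sum_prod_type, Finset.mul_sum, Finset.sum_mul,
    mul_ite, ite_mul, Finset.sum_ite_eq, Finset.sum_ite_eq', mul_assoc]

lemma smul_blockR (a b0 b4 : ℂ) (B1 B3 : Matrix (Fin 2) (Fin 2) ℂ)
    (B2 : Matrix (Fin 3) (Fin 3) ℂ) :
    a • blockR b0 B1 B2 B3 b4 = blockR (a*b0) (a•B1) (a•B2) (a•B3) (a*b4) := by
  ext p q
  simp only [blockR, Matrix.smul_apply, smul_eq_mul]
  split_ifs <;> simp

/-- explicit polynomial version of `c^2 •` the solution matrix. -/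
def Xm (s c x2 : ℂ) : Matrix (Fin 3 × Fin 3) (Fin 3 × Fin 3) ℂ :=
  blockR (c^2) !![c^2*(s+1), -(s*c); c^3, 0]
    !![0, 0, -s; x2*c^2, c^2, x2*s; c^4, 0, c^2*(s+1)]
    !![0, -c; s*c^3, c^2*(s+1)] (c^2*s)

variable (s c x2 : ℂ)

lemma Xm_eq (hc : c ≠ 0) :
    (c^2) • blockR 1 !![s + 1, -(s / c); c, 0]
      !![0, 0, -(s / c ^ 2); x2, 1, x2 * s / c ^ 2; c ^ 2, 0, s + 1]
      !![0, -(1 / c); s * c, s + 1] s = Xm s c x2 := by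
  have h1 : (c^2) • !![s + 1, -(s / c); c, 0] = !![c^2*(s+1), -(s*c); c^3, 0] := by
    ext i j; fin_cases i <;> fin_cases j <;>
      · simp only [Matrix.smul_apply, smul_eq_mul, Matrix.cons_val', Matrix.cons_val_zero,
          Matrix.cons_val_one, Matrix.head_cons, Matrix.empty_val', Matrix.cons_val_fin_one,
          Matrix.head_fin_const, Fin.isValue, Matrix.of_apply, Fin.zero_eta, Fin.mk_one, Fin.reduceFinMk, Matrix.cons_val_two, Matrix.tail_cons]
        try field_simp
        try ring
  have h2 : (c^2) • !![0, 0, -(s / c ^ 2); x2, 1, x2 * s / c ^ 2; c ^ 2, 0, s + 1] =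
      !![0, 0, -s; x2*c^2, c^2, x2*s; c^4, 0, c^2*(s+1)] := by
    ext i j; fin_cases i <;> fin_cases j <;>
      · simp only [Matrix.smul_apply, smul_eq_mul, Matrix.cons_val', Matrix.cons_val_zero,
          Matrix.cons_val_one, Matrix.head_cons, Matrix.empty_val', Matrix.cons_val_fin_one,
          Matrix.head_fin_const, Matrix.cons_val_two, Matrix.tail_cons, Fin.isValue, Matrix.of_apply, Fin.zero_eta, Fin.mk_one, Fin.reduceFinMk]
        try field_simp
        try ring
  have h3 : (c^2) • !![0, -(1 / c); s * c, s + 1] = !![0, -c; s*c^3, c^2*(s+1)] := by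
    ext i j; fin_cases i <;> fin_cases j <;>
      · simp only [Matrix.smul_apply, smul_eq_mul, Matrix.cons_val', Matrix.cons_val_zero,
          Matrix.cons_val_one, Matrix.head_cons, Matrix.empty_val', Matrix.cons_val_fin_one,
          Matrix.head_fin_const, Fin.isValue, Matrix.of_apply, Fin.zero_eta, Fin.mk_one, Fin.reduceFinMk, Matrix.cons_val_two, Matrix.tail_cons]
        try field_simp
        try ring
  rw [smul_blockR, mul_one, h1, h2, h3]
  rfl

lemma fm0 (h : 0 < 3) : (⟨0, h⟩ : Fin 3) = 0 := rfl
lemma fm1 (h : 1 < 3) : (⟨1, h⟩ : Fin 3) = 1 := rfl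
lemma fm2 (h : 2 < 3) : (⟨2, h⟩ : Fin 3) = 2 := rfl

lemma Xe0000 : Xm s c x2 (0,0) (0,0) = c^2 := rfl
lemma Xe0001 : Xm s c x2 (0,0) (0,1) = 0 := rfl
lemma Xe0002 : Xm s c x2 (0,0) (0,2) = 0 := rfl
lemma Xe0010 : Xm s c x2 (0,0) (1,0) = 0 := rfl
lemma Xe0011 : Xm s c x2 (0,0) (1,1) = 0 := rfl
lemma Xe0012 : Xm s c x2 (0,0) (1,2) = 0 := rfl
lemma Xe0020 : Xm s c x2 (0,0) (2,0) = 0 := rfl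
lemma Xe0021 : Xm s c x2 (0,0) (2,1) = 0 := rfl
lemma Xe0022 : Xm s c x2 (0,0) (2,2) = 0 := rfl
lemma Xe0100 : Xm s c x2 (0,1) (0,0) = 0 := rfl
lemma Xe0101 : Xm s c x2 (0,1) (0,1) = 0 := rfl
lemma Xe0102 : Xm s c x2 (0,1) (0,2) = 0 := rfl
lemma Xe0110 : Xm s c x2 (0,1) (1,0) = c^3 := rfl
lemma Xe0111 : Xm s c x2 (0,1) (1,1) = 0 := rfl
lemma Xe0112 : Xm s c x2 (0,1) (1,2) = 0 := rfl
lemma Xe0120 : Xm s c x2 (0,1) (2,0) = 0 := rfl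
lemma Xe0121 : Xm s c x2 (0,1) (2,1) = 0 := rfl
lemma Xe0122 : Xm s c x2 (0,1) (2,2) = 0 := rfl
lemma Xe0200 : Xm s c x2 (0,2) (0,0) = 0 := rfl
lemma Xe0201 : Xm s c x2 (0,2) (0,1) = 0 := rfl
lemma Xe0202 : Xm s c x2 (0,2) (0,2) = c^2*(s+1) := rfl
lemma Xe0210 : Xm s c x2 (0,2) (1,0) = 0 := rfl
lemma Xe0211 : Xm s c x2 (0,2) (1,1) = 0 := rfl
lemma Xe0212 : Xm s c x2 (0,2) (1,2) = 0 := rfl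
lemma Xe0220 : Xm s c x2 (0,2) (2,0) = c^4 := rfl
lemma Xe0221 : Xm s c x2 (0,2) (2,1) = 0 := rfl
lemma Xe0222 : Xm s c x2 (0,2) (2,2) = 0 := rfl
lemma Xe1000 : Xm s c x2 (1,0) (0,0) = 0 := rfl
lemma Xe1001 : Xm s c x2 (1,0) (0,1) = -(s*c) := rfl
lemma Xe1002 : Xm s c x2 (1,0) (0,2) = 0 := rfl
lemma Xe1010 : Xm s c x2 (1,0) (1,0) = c^2*(s+1) := rfl
lemma Xe1011 : Xm s c x2 (1,0) (1,1) = 0 := rfl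
lemma Xe1012 : Xm s c x2 (1,0) (1,2) = 0 := rfl
lemma Xe1020 : Xm s c x2 (1,0) (2,0) = 0 := rfl
lemma Xe1021 : Xm s c x2 (1,0) (2,1) = 0 := rfl
lemma Xe1022 : Xm s c x2 (1,0) (2,2) = 0 := rfl
lemma Xe1100 : Xm s c x2 (1,1) (0,0) = 0 := rfl
lemma Xe1101 : Xm s c x2 (1,1) (0,1) = 0 := rfl
lemma Xe1102 : Xm s c x2 (1,1) (0,2) = x2*s := rfl
lemma Xe1110 : Xm s c x2 (1,1) (1,0) = 0 := rfl
lemma Xe1111 : Xm s c x2 (1,1) (1,1) = c^2 := rfl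
lemma Xe1112 : Xm s c x2 (1,1) (1,2) = 0 := rfl
lemma Xe1120 : Xm s c x2 (1,1) (2,0) = x2*c^2 := rfl
lemma Xe1121 : Xm s c x2 (1,1) (2,1) = 0 := rfl
lemma Xe1122 : Xm s c x2 (1,1) (2,2) = 0 := rfl
lemma Xe1200 : Xm s c x2 (1,2) (0,0) = 0 := rfl
lemma Xe1201 : Xm s c x2 (1,2) (0,1) = 0 := rfl
lemma Xe1202 : Xm s c x2 (1,2) (0,2) = 0 := rfl
lemma Xe1210 : Xm s c x2 (1,2) (1,0) = 0 := rfl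
lemma Xe1211 : Xm s c x2 (1,2) (1,1) = 0 := rfl
lemma Xe1212 : Xm s c x2 (1,2) (1,2) = c^2*(s+1) := rfl
lemma Xe1220 : Xm s c x2 (1,2) (2,0) = 0 := rfl
lemma Xe1221 : Xm s c x2 (1,2) (2,1) = s*c^3 := rfl
lemma Xe1222 : Xm s c x2 (1,2) (2,2) = 0 := rfl
lemma Xe2000 : Xm s c x2 (2,0) (0,0) = 0 := rfl
lemma Xe2001 : Xm s c x2 (2,0) (0,1) = 0 := rfl
lemma Xe2002 : Xm s c x2 (2,0) (0,2) = -s := rfl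
lemma Xe2010 : Xm s c x2 (2,0) (1,0) = 0 := rfl
lemma Xe2011 : Xm s c x2 (2,0) (1,1) = 0 := rfl
lemma Xe2012 : Xm s c x2 (2,0) (1,2) = 0 := rfl
lemma Xe2020 : Xm s c x2 (2,0) (2,0) = 0 := rfl
lemma Xe2021 : Xm s c x2 (2,0) (2,1) = 0 := rfl
lemma Xe2022 : Xm s c x2 (2,0) (2,2) = 0 := rfl
lemma Xe2100 : Xm s c x2 (2,1) (0,0) = 0 := rfl
lemma Xe2101 : Xm s c x2 (2,1) (0,1) = 0 := rfl
lemma Xe2102 : Xm s c x2 (2,1) (0,2) = 0 := rfl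
lemma Xe2110 : Xm s c x2 (2,1) (1,0) = 0 := rfl
lemma Xe2111 : Xm s c x2 (2,1) (1,1) = 0 := rfl
lemma Xe2112 : Xm s c x2 (2,1) (1,2) = -c := rfl
lemma Xe2120 : Xm s c x2 (2,1) (2,0) = 0 := rfl
lemma Xe2121 : Xm s c x2 (2,1) (2,1) = 0 := rfl
lemma Xe2122 : Xm s c x2 (2,1) (2,2) = 0 := rfl
lemma Xe2200 : Xm s c x2 (2,2) (0,0) = 0 := rfl
lemma Xe2201 : Xm s c x2 (2,2) (0,1) = 0 := rfl
lemma Xe2202 : Xm s c x2 (2,2) (0,2) = 0 := rfl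
lemma Xe2210 : Xm s c x2 (2,2) (1,0) = 0 := rfl
lemma Xe2211 : Xm s c x2 (2,2) (1,1) = 0 := rfl
lemma Xe2212 : Xm s c x2 (2,2) (1,2) = 0 := rfl
lemma Xe2220 : Xm s c x2 (2,2) (2,0) = 0 := rfl
lemma Xe2221 : Xm s c x2 (2,2) (2,1) = 0 := rfl
lemma Xe2222 : Xm s c x2 (2,2) (2,2) = c^2*s := rfl

set_option maxHeartbeats 2000000 in
lemma braid_Xm (hs2 : s^2 = -1) (hs3 : s^3 = -s) : Braid (Xm s c x2) := by
  unfold Braid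
  ext ⟨i, j, k⟩ ⟨l, m, n⟩
  rw [L1, L2]
  fin_cases i <;> fin_cases j <;> fin_cases k <;> fin_cases l <;> fin_cases m <;> fin_cases n <;>
  · simp only [fm0, fm1, fm2, Fin.sum_univ_three, Fin.isValue,
      Xe0000, Xe0001, Xe0002, Xe0010, Xe0011, Xe0012, Xe0020, Xe0021, Xe0022, Xe0100, Xe0101, Xe0102, Xe0110, Xe0111, Xe0112, Xe0120, Xe0121, Xe0122, Xe0200, Xe0201, Xe0202, Xe0210, Xe0211, Xe0212, Xe0220, Xe0221, Xe0222, Xe1000, Xe1001, Xe1002, Xe1010, Xe1011, Xe1012, Xe1020, Xe1021, Xe1022, Xe1100, Xe1101, Xe1102, Xe1110, Xe1111, Xe1112, Xe1120, Xe1121, Xe1122, Xe1200, Xe1201, Xe1202, Xe1210, Xe1211, Xe1212, Xe1220, Xe1221, Xe1222, Xe2000, Xe2001, Xe2002, Xe2010, Xe2011, Xe2012, Xe2020, Xe2021, Xe2022, Xe2100, Xe2101, Xe2102, Xe2110, Xe2111, Xe2112, Xe2120, Xe2121, Xe2122, Xe2200, Xe2201, Xe2202, Xe2210, Xe2211, Xe2212,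 Xe2220, Xe2221, Xe2222,
      zero_mul, mul_zero, add_zero, zero_add, neg_mul, mul_neg, neg_neg, neg_zero]
    try ring_nf
    try simp only [hs2, hs3]
    try ring1

end Sol5512Aux

/-- solution 5.5.1.2 satisfies the braid relation. -/
theorem sol5512_braid (s c x2 : ℂ) (hs : s = Complex.I ∨ s = -Complex.I) (hc : c ≠ 0) :
    Braid (blockR 1 !![s + 1, -(s / c); c, 0]
      !![0, 0, -(s / c ^ 2); x2, 1, x2 * s / c ^ 2; c ^ 2, 0, s + 1]
      !![0, -(1 / c); s * c, s + 1] s) := by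
  have hs2 : s ^ 2 = -1 := by
    rcases hs with h | h <;> subst h <;> simp [neg_sq, Complex.I_sq]
  have hs3 : s ^ 3 = -s := by
    rw [pow_succ, hs2]; ring
  apply Sol5512Aux.braid_of_smul (c^2) (pow_ne_zero 2 hc)
  rw [Sol5512Aux.Xm_eq s c x2 hc]
  exact Sol5512Aux.braid_Xm s c x2 hs2 hs3
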